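/- In the quotient ring Q of A_p(r,s) (equivalently, any ring containing invertible x, z and elements y, w^{±1} satisfying the A_p(r,s) relations), the elements L_n = z^{-1} x^{n+1} y for n ∈ ℤ satisfy the two-parameter Virasoro relations p^{n-m} L_n L_m - q^{m-n} L_m L_n = [m-n]_{p,q} L_{m+n}. -/

import Mathlib

/-- The elements `L_n = z⁻¹ x^{n+1} y` in the quotient ring of `A_p(r,s)` (any domain
with invertible `x, z` satisfying the relations of `H_{p,q}` together with the identity
`y x^j = q^j x^j y + [j]_{p,q} x^{j-1} z` for all `j ∈ ℤ`, where
`[j]_{p,q} = (q^j - p^{-j})/(q - p⁻¹)`) satisfy the two-parameter Virasoro relations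
`p^{n-m} L_n L_m - q^{m-n} L_m L_n = [m-n]_{p,q} L_{m+n}`. -/
theorem two_param_virasoro {k A : Type*} [Field k] [Ring A] [Algebra k A]
    (p q : k) (hp : p ≠ 0) (hq : q ≠ 0) (hqp : q ≠ p⁻¹)
    (X Z : Aˣ) (y : A)
    (hzx : (Z : A) * X = p⁻¹ • ((X : A) * Z))
    (hzy : (Z : A) * y = p • (y * Z))
    (hyx : y * X = q • ((X : A) * y) + Z)
    (hid : ∀ j : ℤ, y * ((X ^ j : Aˣ) : A)
      = q ^ j • (((X ^ j : Aˣ) : A) * y)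
        + ((q ^ j - p ^ (-j)) / (q - p⁻¹)) • (((X ^ (j - 1) : Aˣ) : A) * Z)) :
    ∀ n m : ℤ,
      letI L : ℤ → A := fun j => ((Z⁻¹ : Aˣ) : A) * ((X ^ (j + 1) : Aˣ) : A) * y
      p ^ (n - m) • (L n * L m) - q ^ (m - n) • (L m * L n)
        = ((q ^ (m - n) - p ^ (-(m - n))) / (q - p⁻¹)) • L (m + n) := by
  have hXZ1 : (X : A) * Z = p • ((Z : A) * X) := by
    rw [hzx, smul_smul, mul_inv_cancel₀ hp, one_smul]
  have hXiZ1 : ((X⁻¹ : Aˣ) : A) * Z = p⁻¹ • ((Z : A) * ((X⁻¹ : Aˣ) : A)) := by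
    have h := congrArg (fun t => ((X⁻¹ : Aˣ) : A) * t * ((X⁻¹ : Aˣ) : A)) hzx
    simp only [mul_assoc, mul_smul_comm, Units.mul_inv, Units.inv_mul, Units.inv_mul_cancel_left,
      mul_one] at h
    rw [smul_mul_assoc] at h
    exact h
  -- commutation of integer powers of X with Z
  have hXZ : ∀ j : ℤ, ((X ^ j : Aˣ) : A) * Z = p ^ j • ((Z : A) * ((X ^ j : Aˣ) : A)) := by
    intro j
    induction j using Int.induction_on with
    | zero => simp
    | succ i ih =>
        have e : ((X ^ ((i:ℤ) + 1) : Aˣ) : A) = ((X ^ (i:ℤ) : Aˣ) : A) * X := by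
          rw [zpow_add_one]; simp
        rw [e, mul_assoc, hXZ1, mul_smul_comm, ← mul_assoc, ih, smul_mul_assoc, smul_smul,
          mul_assoc, zpow_add_one₀ hp, mul_comm p]
    | pred i ih =>
        have e : ((X ^ (-(i:ℤ) - 1) : Aˣ) : A) = ((X ^ (-(i:ℤ)) : Aˣ) : A) * ((X⁻¹ : Aˣ) : A) := by
          rw [sub_eq_add_neg, zpow_add, zpow_neg_one]; simp
        rw [e, mul_assoc, hXiZ1, mul_smul_comm, ← mul_assoc, ih, smul_mul_assoc, smul_smul,
          mul_assoc, zpow_sub_one₀ hp, mul_comm p⁻¹]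
  -- abbreviation
  have hZiZ : ∀ w : A, ((Z⁻¹ : Aˣ) : A) * ((Z : A) * w) = w := by
    intro w; rw [← mul_assoc, Units.inv_mul, one_mul]
  -- y past Z⁻¹
  have hyZi : ∀ w : A, y * (((Z⁻¹ : Aˣ) : A) * w) = p • (((Z⁻¹ : Aˣ) : A) * (y * w)) := by
    have h := congrArg (fun t => ((Z⁻¹ : Aˣ) : A) * t * ((Z⁻¹ : Aˣ) : A)) hzy
    simp only [mul_assoc, mul_smul_comm, smul_mul_assoc, Units.mul_inv, Units.inv_mul,
      Units.inv_mul_cancel_left, Units.mul_inv_cancel_left, Units.mul_inv_cancel_right,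
      mul_one] at h
    intro w
    rw [← mul_assoc, h, smul_mul_assoc, mul_assoc]
  -- X^j past Z⁻¹
  have hXpZi : ∀ (j : ℤ) (w : A),
      ((X ^ j : Aˣ) : A) * (((Z⁻¹ : Aˣ) : A) * w)
        = p ^ (-j) • (((Z⁻¹ : Aˣ) : A) * (((X ^ j : Aˣ) : A) * w)) := by
    intro j w
    have h := congrArg (fun t => ((Z⁻¹ : Aˣ) : A) * t * ((Z⁻¹ : Aˣ) : A)) (hXZ j)
    simp only [mul_assoc, mul_smul_comm, smul_mul_assoc, Units.mul_inv, Units.inv_mul,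
      Units.inv_mul_cancel_left, Units.mul_inv_cancel_left, Units.mul_inv_cancel_right,
      mul_one] at h
    have h2 : ((X ^ j : Aˣ) : A) * ((Z⁻¹ : Aˣ) : A)
        = p ^ (-j) • (((Z⁻¹ : Aˣ) : A) * ((X ^ j : Aˣ) : A)) := by
      rw [zpow_neg, eq_comm, inv_smul_eq_iff₀ (zpow_ne_zero j hp)]
      exact h
    rw [← mul_assoc, h2, smul_mul_assoc, mul_assoc]
  -- X^j past Z
  have hXpZ : ∀ (j : ℤ) (w : A),
      ((X ^ j : Aˣ) : A) * ((Z : A) * w) = p ^ j • ((Z : A) * (((X ^ j : Aˣ) : A) * w)) := by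
    intro j w
    rw [← mul_assoc, hXZ j, smul_mul_assoc, mul_assoc]
  have hmulX : ∀ (a b : ℤ) (w : A),
      ((X ^ a : Aˣ) : A) * (((X ^ b : Aˣ) : A) * w) = ((X ^ (a + b) : Aˣ) : A) * w := by
    intro a b w
    rw [← mul_assoc, ← Units.val_mul, ← zpow_add]
  have hid' : ∀ (j : ℤ) (w : A),
      y * (((X ^ j : Aˣ) : A) * w)
        = q ^ j • (((X ^ j : Aˣ) : A) * (y * w))
          + ((q ^ j - p ^ (-j)) / (q - p⁻¹)) • (((X ^ (j - 1) : Aˣ) : A) * ((Z : A) * w)) := by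
    intro j w
    rw [← mul_assoc, hid j, add_mul, smul_mul_assoc, smul_mul_assoc, mul_assoc, mul_assoc]
  -- key product computation
  have key : ∀ a b : ℤ,
      (((Z⁻¹ : Aˣ) : A) * ((X ^ (a + 1) : Aˣ) : A) * y) * (((Z⁻¹ : Aˣ) : A) * ((X ^ (b + 1) : Aˣ) : A) * y)
        = (p ^ (-a) * q ^ (b + 1)) •
            (((Z⁻¹ : Aˣ) : A) * (((Z⁻¹ : Aˣ) : A) * (((X ^ (a + b + 2) : Aˣ) : A) * (y * y))))
          + (p ^ (b + 1) * ((q ^ (b + 1) - p ^ (-(b + 1))) / (q - p⁻¹))) •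
            (((Z⁻¹ : Aˣ) : A) * (((X ^ (a + b + 1) : Aˣ) : A) * y)) := by
    intro a b
    simp only [mul_assoc]
    rw [hyZi, hid' (b + 1) y, show (b + 1 - 1 : ℤ) = b from add_sub_cancel_right b 1]
    simp only [mul_add, smul_add, mul_smul_comm, smul_smul]
    rw [hXpZi (a + 1), hXpZi (a + 1)]
    simp only [mul_smul_comm, smul_smul, hmulX, hXpZ, hZiZ]
    rw [show ((a + 1) + (b + 1) : ℤ) = a + b + 2 by ring, show ((a + 1) + b : ℤ) = a + b + 1 by ring]
    match_scalars
    all_goals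
      have hpa : (p:k) ^ a ≠ 0 := zpow_ne_zero a hp
      have hpb : (p:k) ^ b ≠ 0 := zpow_ne_zero b hp
      have hqb : (q:k) ^ b ≠ 0 := zpow_ne_zero b hq
      have hd : q - p⁻¹ ≠ 0 := sub_ne_zero.mpr hqp
      simp only [neg_add, zpow_add₀ hp, zpow_add₀ hq, zpow_neg, zpow_one]
      field_simp
  intro n m
  show p ^ (n - m) • ((((Z⁻¹ : Aˣ) : A) * ((X ^ (n + 1) : Aˣ) : A) * y) * (((Z⁻¹ : Aˣ) : A) * ((X ^ (m + 1) : Aˣ) : A) * y))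
      - q ^ (m - n) • ((((Z⁻¹ : Aˣ) : A) * ((X ^ (m + 1) : Aˣ) : A) * y) * (((Z⁻¹ : Aˣ) : A) * ((X ^ (n + 1) : Aˣ) : A) * y))
    = ((q ^ (m - n) - p ^ (-(m - n))) / (q - p⁻¹)) • (((Z⁻¹ : Aˣ) : A) * ((X ^ (m + n + 1) : Aˣ) : A) * y)
  rw [key n m, key m n, show (n + m + 2 : ℤ) = m + n + 2 by ring,
    show (n + m + 1 : ℤ) = m + n + 1 by ring]
  simp only [mul_assoc, smul_add, smul_sub, smul_smul]
  match_scalars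
  · -- coefficient of the y*y term: vanishes
    have h1 : (p:k) ^ n ≠ 0 := zpow_ne_zero n hp
    have h2 : (p:k) ^ m ≠ 0 := zpow_ne_zero m hp
    have h3 : (q:k) ^ n ≠ 0 := zpow_ne_zero n hq
    have h4 : (q:k) ^ m ≠ 0 := zpow_ne_zero m hq
    simp only [zpow_sub₀ hp, zpow_sub₀ hq, zpow_add₀ hp, zpow_add₀ hq, zpow_neg, zpow_one]
    field_simp
    ring
  · -- coefficient of L (m+n)
    simp only [mul_one]
    have h : q - p⁻¹ ≠ 0 := sub_ne_zero.mpr hqp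
    have h1 : (p:k) ^ n ≠ 0 := zpow_ne_zero n hp
    have h2 : (p:k) ^ m ≠ 0 := zpow_ne_zero m hp
    have h3 : (q:k) ^ n ≠ 0 := zpow_ne_zero n hq
    have h4 : (q:k) ^ m ≠ 0 := zpow_ne_zero m hq
    have keyc : p ^ (n-m) * (p ^ (m+1) * (q^(m+1) - p^(-(m+1))))
        - q ^ (m-n) * (p ^ (n+1) * (q^(n+1) - p^(-(n+1)))) = q^(m-n) - p^(-(m-n)) := by
      simp only [neg_add, neg_sub, zpow_sub₀ hp, zpow_sub₀ hq, zpow_add₀ hp, zpow_add₀ hq,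
        zpow_neg, zpow_one]
      field_simp
      ring
    calc p ^ (n-m) * (p ^ (m+1) * ((q^(m+1) - p^(-(m+1)))/(q-p⁻¹)))
          - q ^ (m-n) * (p ^ (n+1) * ((q^(n+1) - p^(-(n+1)))/(q-p⁻¹)))
        = (p ^ (n-m) * (p ^ (m+1) * (q^(m+1) - p^(-(m+1))))
            - q ^ (m-n) * (p ^ (n+1) * (q^(n+1) - p^(-(n+1))))) / (q-p⁻¹) := by ring
      _ = (q^(m-n) - p^(-(m-n)))/(q-p⁻¹) := by rw [keyc]
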